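/- Consider the constant-product AMM whose mempool contains exactly one honest transaction tx = swap sending v > 0 units of τ₀ with minimum-output constraint vmin = 0. Then for every list of adversarial moves tr, the adversary's gain satisfies gainMoves σ tr < extractable(σ) + v·pr₀, where extractable(σ) = (√(pr₀·b₀) − √(pr₁·b₁))² and b₀, b₁ are the AMM reserves in σ. -/

import Mathlib

open scoped NNReal

/-! A constant-product AMM over two token types τ₀, τ₁ with fixed positive
prices pr₀, pr₁. A swap sending `v > 0` units of token τ returns
`v · r' / (r + v)` units of the other token, where `r`, `r'` are the input and
output reserves, so the product of reserves is invariant. Honest swaps come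
from the mempool and carry a minimum-output constraint `vmin`; the adversary
(with unbounded funds) can craft arbitrary swaps. -/

inductive Participant where
  | Hon : String → Participant
  | Adv : Participant
deriving DecidableEq

inductive Token where
  | τ₀ : Token
  | τ₁ : Token
deriving DecidableEq

/-- The other token type. -/
def Token.other : Token → Token
  | .τ₀ => .τ₁
  | .τ₁ => .τ₀

abbrev TxId := ℕ

/-- A `swap` transaction: participant `P` sends `v > 0` units of token `τ`,
requiring at least `vmin` units of the other token in exchange. -/
structure Tx where
  P : Participant
  v : ℝ
  v_pos : 0 < v
  τ : Token
  vmin : ℝ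

/-- The honest part of the system state: AMM reserves `bal`, cumulative honest
wallet `wal`, and the mempool. -/
structure AMMState where
  bal : Token → ℝ≥0
  wal : Token → ℝ≥0
  mempool : List (TxId × Tx)

/-- System state: adversary wallet plus honest state. -/
structure AMMSys where
  Δ : Token → ℝ
  s : AMMState

/-- Semantics of a swap of `v` units of `τin` by `P` with minimum output `vmin`. -/
noncomputable def swapSem (P : Participant) (v : ℝ) (τin : Token) (vmin : ℝ)
    (σ : AMMSys) : Option AMMSys :=
  let τout := τin.other
  let rin : ℝ := σ.s.bal τin
  let rout : ℝ := σ.s.bal τout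
  let x : ℝ := v * rout / (rin + v)
  if 0 < v ∧ (P = .Adv ∨ v ≤ (σ.s.wal τin : ℝ)) ∧ vmin ≤ x ∧ x < rout then
    some { Δ := if P = .Adv
                then fun τ => σ.Δ τ + (if τ = τout then x else 0)
                                    - (if τ = τin then v else 0)
                else σ.Δ
         , s := { bal := fun τ => if τ = τin then σ.s.bal τin + v.toNNReal
                                  else σ.s.bal τout - x.toNNReal
                , wal := if P = .Adv then σ.s.wal
                         else fun τ => σ.s.wal τ + (if τ = τout then x.toNNReal else 0)
                                               - (if τ = τin then v.toNNReal else 0)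
                , mempool := σ.s.mempool } }
  else none

/-- Adversarial moves: craft an adversary-signed swap, or execute a mempool
transaction. -/
inductive Move where
  | adv : (v : ℝ) → 0 < v → (τ : Token) → (vmin : ℝ) → Move
  | mempool : TxId → Move

/-- Semantics of adversarial moves. A successfully executed mempool transaction
is removed from the mempool. -/
noncomputable def semMove (σ : AMMSys) : Move → Option AMMSys
  | .adv v _ τ vmin => swapSem .Adv v τ vmin σ
  | .mempool id =>
    match σ.s.mempool.find? (fun p => p.1 == id) with
    | none => none
    | some (_, tx) =>
      match swapSem tx.P tx.v tx.τ tx.vmin σ with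
      | none => none
      | some σ' =>
        some { Δ := σ'.Δ
             , s := { bal := σ'.s.bal, wal := σ'.s.wal
                    , mempool := σ.s.mempool.filter (fun p => p.1 != id) } }

/-- Composed effect of a list of moves (failing moves are skipped). -/
noncomputable def semMoves (σ : AMMSys) : List Move → AMMSys
  | [] => σ
  | m :: ms =>
    match semMove σ m with
    | none => semMoves σ ms
    | some σ' => semMoves σ' ms

/-- Adversarial gain of a list of moves, at token prices `pr₀`, `pr₁`. -/
noncomputable def gainMoves (pr₀ pr₁ : ℝ) (σ : AMMSys) (tr : List Move) : ℝ :=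
  pr₀ * ((semMoves σ tr).Δ .τ₀ - σ.Δ .τ₀) + pr₁ * ((semMoves σ tr).Δ .τ₁ - σ.Δ .τ₁)

/-- Maximal extractable value. -/
structure MEV (pr₀ pr₁ : ℝ) (σ : AMMSys) (v : ℝ) : Prop where
  trace_reaches_v : ∃ tr, gainMoves pr₀ pr₁ σ tr = v
  other_traces_worse : ∀ tr, gainMoves pr₀ pr₁ σ tr ≤ v

/-- Least upper bound of the extractable values. -/
structure MEVsup (pr₀ pr₁ : ℝ) (σ : AMMSys) (v : ℝ) : Prop where
  traces_approx : ∀ ε : ℝ, 0 < ε → ∃ tr, v ≤ gainMoves pr₀ pr₁ σ tr + ε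
  other_traces_worse : ∀ tr, gainMoves pr₀ pr₁ σ tr ≤ v

/-- Value extractable by rebalancing the AMM (arbitrage). -/
noncomputable def extractable (pr₀ pr₁ : ℝ) (σ : AMMSys) : ℝ :=
  (Real.sqrt (pr₀ * (σ.s.bal .τ₀ : ℝ)) - Real.sqrt (pr₁ * (σ.s.bal .τ₁ : ℝ)))^2

section Aux

/-- Value of the AMM reserves. -/
noncomputable def Vfun (pr₀ pr₁ : ℝ) (σ : AMMSys) : ℝ :=
  pr₀ * (σ.s.bal .τ₀ : ℝ) + pr₁ * (σ.s.bal .τ₁ : ℝ)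

/-- Product of the AMM reserves. -/
noncomputable def Kfun (σ : AMMSys) : ℝ :=
  (σ.s.bal .τ₀ : ℝ) * (σ.s.bal .τ₁ : ℝ)

lemma extractable_eq (pr₀ pr₁ : ℝ) (hpr₀ : 0 < pr₀) (hpr₁ : 0 < pr₁) (σ : AMMSys) :
    extractable pr₀ pr₁ σ = Vfun pr₀ pr₁ σ - 2 * Real.sqrt (pr₀ * pr₁ * Kfun σ) := by
  have h0 : (0:ℝ) ≤ pr₀ * (σ.s.bal .τ₀ : ℝ) := by positivity
  have h1 : (0:ℝ) ≤ pr₁ * (σ.s.bal .τ₁ : ℝ) := by positivity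
  have hm : Real.sqrt (pr₀ * (σ.s.bal .τ₀ : ℝ)) * Real.sqrt (pr₁ * (σ.s.bal .τ₁ : ℝ))
      = Real.sqrt (pr₀ * pr₁ * Kfun σ) := by
    rw [← Real.sqrt_mul h0]
    congr 1
    simp [Kfun]; ring
  unfold extractable Vfun
  rw [sub_sq, Real.sq_sqrt h0, Real.sq_sqrt h1, mul_assoc, hm]
  ring

lemma extractable_nonneg (pr₀ pr₁ : ℝ) (σ : AMMSys) : 0 ≤ extractable pr₀ pr₁ σ :=
  sq_nonneg _

/-- Main facts about a successful swap. -/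
lemma swap_step (pr₀ pr₁ : ℝ) (hpr₀ : 0 < pr₀) (hpr₁ : 0 < pr₁)
    (P : Participant) (v : ℝ) (τin : Token) (vmin : ℝ)
    (σ σ' : AMMSys) (h : swapSem P v τin vmin σ = some σ')
    (hb₀ : 0 < σ.s.bal .τ₀) (hb₁ : 0 < σ.s.bal .τ₁) :
    (0 < σ'.s.bal .τ₀ ∧ 0 < σ'.s.bal .τ₁) ∧ Kfun σ' = Kfun σ ∧
    σ'.s.mempool = σ.s.mempool ∧
    (P = .Adv → σ'.s.wal = σ.s.wal ∧
      pr₀ * (σ'.Δ .τ₀ - σ.Δ .τ₀) + pr₁ * (σ'.Δ .τ₁ - σ.Δ .τ₁)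
        = Vfun pr₀ pr₁ σ - Vfun pr₀ pr₁ σ') ∧
    (P ≠ .Adv → σ'.Δ = σ.Δ ∧
      Vfun pr₀ pr₁ σ' < Vfun pr₀ pr₁ σ
        + (if τin = .τ₀ then pr₀ * v else pr₁ * v)) := by
  simp only [swapSem] at h
  split_ifs at h with hc hP
  all_goals first
    | exact Option.noConfusion h
    | (obtain ⟨hv, hown, hmin, hlt⟩ := hc; obtain rfl := (Option.some.inj h); cases τin)
  all_goals (try simp only [Token.other,
    show (Token.τ₁ = Token.τ₀) = False from by simp,
    show (Token.τ₀ = Token.τ₁) = False from by simp,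
    if_true, if_false] at hown hmin hlt ⊢)
  all_goals clear h hown hmin
  -- four goals: (Adv, τ₀), (Adv, τ₁), (¬Adv, τ₀), (¬Adv, τ₁)
  · -- Adv, τ₀
    set x : ℝ := v * (σ.s.bal .τ₁ : ℝ) / ((σ.s.bal .τ₀ : ℝ) + v) with hx
    have hr0 : (0:ℝ) < (σ.s.bal .τ₀ : ℝ) := hb₀
    have hr1 : (0:ℝ) < (σ.s.bal .τ₁ : ℝ) := hb₁
    have hx0 : 0 ≤ x := by rw [hx]; positivity
    have hxle : x.toNNReal ≤ σ.s.bal .τ₁ := Real.toNNReal_le_iff_le_coe.mpr hlt.le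
    have hc0 : ((σ.s.bal .τ₀ + v.toNNReal : ℝ≥0) : ℝ) = (σ.s.bal .τ₀ : ℝ) + v := by
      rw [NNReal.coe_add, Real.coe_toNNReal _ hv.le]
    have hc1 : ((σ.s.bal .τ₁ - x.toNNReal : ℝ≥0) : ℝ) = (σ.s.bal .τ₁ : ℝ) - x := by
      rw [NNReal.coe_sub hxle, Real.coe_toNNReal _ hx0]
    refine ⟨⟨?_, ?_⟩, ?_, by trivial, fun _ => ⟨by trivial, ?_⟩, fun hn => absurd hP hn⟩
    · try simp only [reduceIte, if_true]
      rw [← NNReal.coe_pos, hc0]; linarith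
    · try simp only [reduceIte, if_true]
      rw [← NNReal.coe_pos, hc1]; linarith
    · simp [Kfun, hc0, hc1]
      rw [hx]
      field_simp
      ring
    · simp [Vfun, hc0, hc1]
      ring
  · -- Adv, τ₁
    set x : ℝ := v * (σ.s.bal .τ₀ : ℝ) / ((σ.s.bal .τ₁ : ℝ) + v) with hx
    have hr0 : (0:ℝ) < (σ.s.bal .τ₀ : ℝ) := hb₀
    have hr1 : (0:ℝ) < (σ.s.bal .τ₁ : ℝ) := hb₁
    have hx0 : 0 ≤ x := by rw [hx]; positivity
    have hxle : x.toNNReal ≤ σ.s.bal .τ₀ := Real.toNNReal_le_iff_le_coe.mpr hlt.le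
    have hc0 : ((σ.s.bal .τ₁ + v.toNNReal : ℝ≥0) : ℝ) = (σ.s.bal .τ₁ : ℝ) + v := by
      rw [NNReal.coe_add, Real.coe_toNNReal _ hv.le]
    have hc1 : ((σ.s.bal .τ₀ - x.toNNReal : ℝ≥0) : ℝ) = (σ.s.bal .τ₀ : ℝ) - x := by
      rw [NNReal.coe_sub hxle, Real.coe_toNNReal _ hx0]
    refine ⟨⟨?_, ?_⟩, ?_, by trivial, fun _ => ⟨by trivial, ?_⟩, fun hn => absurd hP hn⟩
    · try simp only [reduceIte, if_true]
      rw [← NNReal.coe_pos, hc1]; linarith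
    · try simp only [reduceIte, if_true]
      rw [← NNReal.coe_pos, hc0]; linarith
    · simp [Kfun, hc0, hc1]
      rw [hx]
      field_simp
      ring
    · simp [Vfun, hc0, hc1]
      ring
  · -- ¬Adv, τ₀
    set x : ℝ := v * (σ.s.bal .τ₁ : ℝ) / ((σ.s.bal .τ₀ : ℝ) + v) with hx
    have hr0 : (0:ℝ) < (σ.s.bal .τ₀ : ℝ) := hb₀
    have hr1 : (0:ℝ) < (σ.s.bal .τ₁ : ℝ) := hb₁
    have hx0 : 0 ≤ x := by rw [hx]; positivity
    have hxle : x.toNNReal ≤ σ.s.bal .τ₁ := Real.toNNReal_le_iff_le_coe.mpr hlt.le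
    have hc0 : ((σ.s.bal .τ₀ + v.toNNReal : ℝ≥0) : ℝ) = (σ.s.bal .τ₀ : ℝ) + v := by
      rw [NNReal.coe_add, Real.coe_toNNReal _ hv.le]
    have hc1 : ((σ.s.bal .τ₁ - x.toNNReal : ℝ≥0) : ℝ) = (σ.s.bal .τ₁ : ℝ) - x := by
      rw [NNReal.coe_sub hxle, Real.coe_toNNReal _ hx0]
    refine ⟨⟨?_, ?_⟩, ?_, by trivial, fun hA => absurd hA hP, fun _ => ⟨by trivial, ?_⟩⟩
    · try simp only [reduceIte, if_true]
      rw [← NNReal.coe_pos, hc0]; linarith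
    · try simp only [reduceIte, if_true]
      rw [← NNReal.coe_pos, hc1]; linarith
    · simp [Kfun, hc0, hc1]
      rw [hx]
      field_simp
      ring
    · simp [Vfun, hc0, hc1]
      have hxpos : 0 < x := by rw [hx]; positivity
      nlinarith [mul_pos hpr₁ hxpos]
  · -- ¬Adv, τ₁
    set x : ℝ := v * (σ.s.bal .τ₀ : ℝ) / ((σ.s.bal .τ₁ : ℝ) + v) with hx
    have hr0 : (0:ℝ) < (σ.s.bal .τ₀ : ℝ) := hb₀
    have hr1 : (0:ℝ) < (σ.s.bal .τ₁ : ℝ) := hb₁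
    have hx0 : 0 ≤ x := by rw [hx]; positivity
    have hxle : x.toNNReal ≤ σ.s.bal .τ₀ := Real.toNNReal_le_iff_le_coe.mpr hlt.le
    have hc0 : ((σ.s.bal .τ₁ + v.toNNReal : ℝ≥0) : ℝ) = (σ.s.bal .τ₁ : ℝ) + v := by
      rw [NNReal.coe_add, Real.coe_toNNReal _ hv.le]
    have hc1 : ((σ.s.bal .τ₀ - x.toNNReal : ℝ≥0) : ℝ) = (σ.s.bal .τ₀ : ℝ) - x := by
      rw [NNReal.coe_sub hxle, Real.coe_toNNReal _ hx0]
    refine ⟨⟨?_, ?_⟩, ?_, by trivial, fun hA => absurd hA hP, fun _ => ⟨by trivial, ?_⟩⟩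
    · try simp only [reduceIte, if_true]
      rw [← NNReal.coe_pos, hc1]; linarith
    · try simp only [reduceIte, if_true]
      rw [← NNReal.coe_pos, hc0]; linarith
    · simp [Kfun, hc0, hc1]
      rw [hx]
      field_simp
      ring
    · simp [Vfun, hc0, hc1]
      have hxpos : 0 < x := by rw [hx]; positivity
      nlinarith [mul_pos hpr₀ hxpos]

lemma gain_cons_some (pr₀ pr₁ : ℝ) (σ σ' : AMMSys) (m : Move) (tr : List Move)
    (h : semMove σ m = some σ') :
    gainMoves pr₀ pr₁ σ (m :: tr)
      = (pr₀ * (σ'.Δ .τ₀ - σ.Δ .τ₀) + pr₁ * (σ'.Δ .τ₁ - σ.Δ .τ₁))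
        + gainMoves pr₀ pr₁ σ' tr := by
  simp only [gainMoves, semMoves, h]
  ring

lemma gain_cons_none (pr₀ pr₁ : ℝ) (σ : AMMSys) (m : Move) (tr : List Move)
    (h : semMove σ m = none) :
    gainMoves pr₀ pr₁ σ (m :: tr) = gainMoves pr₀ pr₁ σ tr := by
  simp only [gainMoves, semMoves, h]

/-- Empty-mempool bound. -/
lemma lemA (pr₀ pr₁ : ℝ) (hpr₀ : 0 < pr₀) (hpr₁ : 0 < pr₁) :
    ∀ tr : List Move, ∀ σ : AMMSys, σ.s.mempool = [] →
      0 < σ.s.bal .τ₀ → 0 < σ.s.bal .τ₁ →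
      gainMoves pr₀ pr₁ σ tr ≤ extractable pr₀ pr₁ σ := by
  intro tr
  induction tr with
  | nil =>
    intro σ _ _ _
    have h0 : gainMoves pr₀ pr₁ σ [] = 0 := by simp [gainMoves, semMoves]
    rw [h0]; exact extractable_nonneg _ _ _
  | cons m tr ih =>
    intro σ hmp h0 h1
    cases m with
    | adv v hv τ vmin =>
      cases hsem : swapSem .Adv v τ vmin σ with
      | none =>
        rw [gain_cons_none _ _ _ _ _ (by simpa only [semMove] using hsem)]
        exact ih σ hmp h0 h1
      | some σ' =>
        obtain ⟨⟨h0', h1'⟩, hK, hm, hAdv, _⟩ :=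
          swap_step pr₀ pr₁ hpr₀ hpr₁ _ v τ vmin σ σ' hsem h0 h1
        obtain ⟨hw, hg⟩ := hAdv rfl
        rw [gain_cons_some pr₀ pr₁ σ σ' _ tr (by simpa only [semMove] using hsem), hg]
        have hih := ih σ' (hm.trans hmp) h0' h1'
        have hE := extractable_eq pr₀ pr₁ hpr₀ hpr₁ σ
        have hE' := extractable_eq pr₀ pr₁ hpr₀ hpr₁ σ'
        rw [hK] at hE'
        linarith
    | mempool j =>
      have hnone : semMove σ (.mempool j) = none := by
        simp [semMove, hmp]
      rw [gain_cons_none _ _ _ _ _ hnone]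
      exact ih σ hmp h0 h1

/-- Singleton-mempool bound. -/
lemma lemB (pr₀ pr₁ : ℝ) (hpr₀ : 0 < pr₀) (hpr₁ : 0 < pr₁) (i : TxId) (t : Tx)
    (hτ : t.τ = .τ₀) (hvmin : t.vmin = 0) (hhon : t.P ≠ .Adv) :
    ∀ tr : List Move, ∀ σ : AMMSys, σ.s.mempool = [(i, t)] →
      t.v ≤ (σ.s.wal .τ₀ : ℝ) →
      0 < σ.s.bal .τ₀ → 0 < σ.s.bal .τ₁ →
      gainMoves pr₀ pr₁ σ tr < extractable pr₀ pr₁ σ + pr₀ * t.v := by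
  intro tr
  induction tr with
  | nil =>
    intro σ _ _ _ _
    have h0 : gainMoves pr₀ pr₁ σ [] = 0 := by simp [gainMoves, semMoves]
    rw [h0]
    have := extractable_nonneg pr₀ pr₁ σ
    have := mul_pos hpr₀ t.v_pos
    linarith
  | cons m tr ih =>
    intro σ hmp hwal h0 h1
    cases m with
    | adv v hv τ vmin =>
      cases hsem : swapSem .Adv v τ vmin σ with
      | none =>
        rw [gain_cons_none _ _ _ _ _ (by simpa only [semMove] using hsem)]
        exact ih σ hmp hwal h0 h1
      | some σ' =>
        obtain ⟨⟨h0', h1'⟩, hK, hm, hAdv, _⟩ :=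
          swap_step pr₀ pr₁ hpr₀ hpr₁ _ v τ vmin σ σ' hsem h0 h1
        obtain ⟨hw, hg⟩ := hAdv rfl
        rw [gain_cons_some pr₀ pr₁ σ σ' _ tr (by simpa only [semMove] using hsem), hg]
        have hih := ih σ' (hm.trans hmp) (by rw [hw]; exact hwal) h0' h1'
        have hE := extractable_eq pr₀ pr₁ hpr₀ hpr₁ σ
        have hE' := extractable_eq pr₀ pr₁ hpr₀ hpr₁ σ'
        rw [hK] at hE'
        linarith
    | mempool j =>
      by_cases hj : i = j
      · -- the honest transaction executes
        subst hj
        have hf : σ.s.mempool.find? (fun p => p.1 == i) = some (i, t) := by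
          simp [hmp]
        obtain ⟨σ', hsw⟩ : ∃ σ', swapSem t.P t.v t.τ t.vmin σ = some σ' := by
          rw [hτ]
          simp only [swapSem, Token.other]
          erw [if_pos (c := 0 < t.v ∧ _)]
          · exact ⟨_, rfl⟩
          · refine ⟨t.v_pos, Or.inr hwal, ?_, ?_⟩
            · rw [hvmin]
              have hr1 : (0:ℝ) ≤ (σ.s.bal .τ₁ : ℝ) := (σ.s.bal .τ₁).coe_nonneg
              have hr0 : (0:ℝ) < (σ.s.bal .τ₀ : ℝ) := h0
              have hv := t.v_pos
              positivity
            · have hr1 : (0:ℝ) < (σ.s.bal .τ₁ : ℝ) := h1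
              have hr0 : (0:ℝ) < (σ.s.bal .τ₀ : ℝ) := h0
              have hv := t.v_pos
              rw [div_lt_iff₀ (by linarith)]
              nlinarith
        obtain ⟨⟨h0', h1'⟩, hK, hm, _, hHon⟩ :=
          swap_step pr₀ pr₁ hpr₀ hpr₁ t.P t.v t.τ t.vmin σ σ' hsw h0 h1
        obtain ⟨hΔ, hV⟩ := hHon hhon
        rw [hτ] at hV
        norm_num at hV
        set σ'' : AMMSys :=
          { Δ := σ'.Δ
          , s := { bal := σ'.s.bal, wal := σ'.s.wal
                 , mempool := σ.s.mempool.filter (fun p => p.1 != i) } } with hσ''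
        have hsm : semMove σ (.mempool i) = some σ'' := by
          simp only [semMove, hf, hsw]
          rfl
        have hmp'' : σ''.s.mempool = [] := by
          simp [hσ'', hmp]
        have hb0'' : 0 < σ''.s.bal .τ₀ := h0'
        have hb1'' : 0 < σ''.s.bal .τ₁ := h1'
        have hA := lemA pr₀ pr₁ hpr₀ hpr₁ tr σ'' hmp'' hb0'' hb1''
        rw [gain_cons_some pr₀ pr₁ σ σ'' _ tr hsm]
        have hΔ'' : σ''.Δ = σ.Δ := hΔ
        rw [hΔ'']
        have hE := extractable_eq pr₀ pr₁ hpr₀ hpr₁ σ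
        have hE'' := extractable_eq pr₀ pr₁ hpr₀ hpr₁ σ''
        have hK'' : Kfun σ'' = Kfun σ := hK
        have hV'' : Vfun pr₀ pr₁ σ'' = Vfun pr₀ pr₁ σ' := rfl
        rw [hK''] at hE''
        rw [hV''] at hE''
        have : (pr₀ * (σ.Δ Token.τ₀ - σ.Δ Token.τ₀) + pr₁ * (σ.Δ Token.τ₁ - σ.Δ Token.τ₁)) = 0 := by
          ring
        rw [this, zero_add]
        linarith
      · -- wrong id: the move fails
        have hnone : semMove σ (.mempool j) = none := by
          simp [semMove, hmp, List.find?, hj]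
        rw [gain_cons_none _ _ _ _ _ hnone]
        exact ih σ hmp hwal h0 h1

end Aux

/-- If the mempool contains exactly one honest swap of `v > 0` units of τ₀ with
minimum-output constraint `vmin = 0` (and the honest sender owns the `v` units),
then every adversarial trace gains strictly less than
`extractable σ + v·pr₀`. -/
theorem gain_lt_sup_singleton_vmin_zero (pr₀ pr₁ : ℝ)
    (hpr₀ : 0 < pr₀) (hpr₁ : 0 < pr₁) (σ : AMMSys)
    (hb₀ : 0 < σ.s.bal .τ₀) (hb₁ : 0 < σ.s.bal .τ₁)
    (id : TxId) (tx : Tx)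
    (hmp : σ.s.mempool = [(id, tx)])
    (hτ : tx.τ = .τ₀) (hvmin : tx.vmin = 0) (hhon : tx.P ≠ .Adv)
    (howns : tx.v ≤ (σ.s.wal .τ₀ : ℝ)) :
    ∀ tr : List Move,
      gainMoves pr₀ pr₁ σ tr < extractable pr₀ pr₁ σ + tx.v * pr₀ := by
  intro tr
  have h := lemB pr₀ pr₁ hpr₀ hpr₁ id tx hτ hvmin hhon tr σ hmp howns hb₀ hb₁
  linarith
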